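/- arXiv:1102.1859 — 3 statements merged into one kernel-verified Lean document; each statement's English description precedes it below -/
import Mathlib

section
/- Let G be a finite simple graph with d_c(G) ≥ 1. Then there exists an independent set S₀ with d(S₀) > 0 and |S₀| ≤ |ker(G)| − d_c(G) + 1; that is, min{|S₀| : S₀ independent, d(S₀) > 0} ≤ |ker(G)| − d_c(G) + 1. -/
open Finset

namespace CritGraph

variable {V : Type*} [Fintype V] [DecidableEq V]

/-- The neighborhood of a set of vertices `X`:
all vertices having at least one neighbor in `X`. -/
def nbhd (G : SimpleGraph V) [DecidableRel G.Adj] (X : Finset V) : Finset V :=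
  univ.filter fun v => ∃ x ∈ X, G.Adj v x

/-- The difference `d(X) = |X| - |N(X)|` of a set of vertices `X`. -/
def diff (G : SimpleGraph V) [DecidableRel G.Adj] (X : Finset V) : ℤ :=
  (X.card : ℤ) - ((nbhd G X).card : ℤ)

/-- A set of vertices is independent if no two of its vertices are adjacent. -/
def IsIndep (G : SimpleGraph V) (S : Finset V) : Prop :=
  ∀ u ∈ S, ∀ v ∈ S, ¬ G.Adj u v

instance (G : SimpleGraph V) [DecidableRel G.Adj] : DecidablePred (IsIndep G) := fun S =>
  inferInstanceAs (Decidable (∀ u ∈ S, ∀ v ∈ S, ¬ G.Adj u v))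

/-- The critical difference `d_c(G) = max {d(X) : X ⊆ V}`. -/
def dC (G : SimpleGraph V) [DecidableRel G.Adj] : ℤ :=
  (univ : Finset V).powerset.sup' (Finset.powerset_nonempty _) (diff G)

/-- The critical independence difference `id_c(G) = max {d(I) : I independent}`. -/
def idC (G : SimpleGraph V) [DecidableRel G.Adj] : ℤ :=
  ((univ : Finset V).powerset.filter (IsIndep G)).sup'
    ⟨∅, by simp [IsIndep]⟩ (diff G)

/-- `A` is a critical independent set: `A` is independent and
`d(A) = max {d(I) : I independent}`. -/
def IsCritIndep (G : SimpleGraph V) [DecidableRel G.Adj] (A : Finset V) : Prop :=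
  IsIndep G A ∧ ∀ I : Finset V, IsIndep G I → diff G I ≤ diff G A

instance (G : SimpleGraph V) [DecidableRel G.Adj] : DecidablePred (IsCritIndep G) := fun A =>
  inferInstanceAs (Decidable (IsIndep G A ∧ ∀ I : Finset V, IsIndep G I → diff G I ≤ diff G A))

/-- `ker(G)`: the intersection of all critical independent sets of `G`. -/
def kerG (G : SimpleGraph V) [DecidableRel G.Adj] : Finset V :=
  univ.filter fun v => ∀ A : Finset V, IsCritIndep G A → v ∈ A

/-- `G - v`: the induced subgraph of `G` on `V \ {v}`. -/
def deleteVert (G : SimpleGraph V) (v : V) : SimpleGraph {u : V // u ≠ v} :=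
  G.comap Subtype.val

instance (G : SimpleGraph V) (v : V) [DecidableRel G.Adj] :
    DecidableRel (deleteVert G v).Adj := fun a b =>
  inferInstanceAs (Decidable (G.Adj a.val b.val))

/-- `S` is an inclusion-minimal independent set with positive difference. -/
def MinPosIndep (G : SimpleGraph V) [DecidableRel G.Adj] (S : Finset V) : Prop :=
  IsIndep G S ∧ 0 < diff G S ∧ ∀ S' ⊂ S, ¬ (IsIndep G S' ∧ 0 < diff G S')

/-- `S` is a maximum independent set. -/
def IsMaxIndep (G : SimpleGraph V) (S : Finset V) : Prop :=
  IsIndep G S ∧ ∀ I : Finset V, IsIndep G I → I.card ≤ S.card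

instance (G : SimpleGraph V) [DecidableRel G.Adj] : DecidablePred (IsMaxIndep G) := fun S =>
  inferInstanceAs (Decidable (IsIndep G S ∧ ∀ I : Finset V, IsIndep G I → I.card ≤ S.card))

/-- `core(G)`: the intersection of all maximum independent sets of `G`. -/
def coreG (G : SimpleGraph V) [DecidableRel G.Adj] : Finset V :=
  univ.filter fun v => ∀ A : Finset V, IsMaxIndep G A → v ∈ A



section Aux

variable (G : SimpleGraph V) [DecidableRel G.Adj]

lemma mem_nbhd' {X : Finset V} {v : V} : v ∈ nbhd G X ↔ ∃ x ∈ X, G.Adj v x := by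
  simp [nbhd]

lemma nbhd_mono' {X Y : Finset V} (h : X ⊆ Y) : nbhd G X ⊆ nbhd G Y := by
  intro v hv
  rw [mem_nbhd'] at hv ⊢
  obtain ⟨x, hx, hadj⟩ := hv
  exact ⟨x, h hx, hadj⟩

lemma diff_le_dC' (X : Finset V) : diff G X ≤ dC G :=
  Finset.le_sup' (diff G) (by simp)

lemma indep_sdiff_nbhd (X : Finset V) : IsIndep G (X \ nbhd G X) := by
  intro u hu v hv hadj
  rw [mem_sdiff] at hu hv
  exact hv.2 ((mem_nbhd' G).2 ⟨u, hu.1, hadj.symm⟩)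

lemma diff_le_diff_sdiff_nbhd (X : Finset V) : diff G X ≤ diff G (X \ nbhd G X) := by
  have key : nbhd G (X \ nbhd G X) ⊆ nbhd G X \ X := by
    intro w hw
    rw [mem_nbhd'] at hw
    obtain ⟨v, hv, hadj⟩ := hw
    rw [mem_sdiff] at hv
    rw [mem_sdiff]
    refine ⟨(mem_nbhd' G).2 ⟨v, hv.1, hadj⟩, fun hwX => ?_⟩
    exact hv.2 ((mem_nbhd' G).2 ⟨w, hwX, hadj.symm⟩)
  have h2 := card_le_card key
  have h3 := card_sdiff_add_card_inter X (nbhd G X)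
  have h4 := card_sdiff_add_card_inter (nbhd G X) X
  have h5 : (nbhd G X ∩ X).card = (X ∩ nbhd G X).card := by rw [inter_comm]
  unfold diff
  omega

/-- There exists a critical independent set, and its difference equals `dC`. -/
lemma exists_critIndep : ∃ A : Finset V, IsCritIndep G A ∧ diff G A = dC G := by
  obtain ⟨A, hAmem, hA⟩ := Finset.exists_mem_eq_sup'
    (⟨∅, by simp [IsIndep]⟩ : ((univ : Finset V).powerset.filter (IsIndep G)).Nonempty)
    (diff G)
  have hAind : IsIndep G A := (mem_filter.1 hAmem).2
  have hmax : ∀ I : Finset V, IsIndep G I → diff G I ≤ diff G A := by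
    intro I hI
    rw [← hA]
    exact Finset.le_sup' (diff G) (mem_filter.2 ⟨by simp, hI⟩)
  refine ⟨A, ⟨hAind, hmax⟩, le_antisymm (diff_le_dC' G A) ?_⟩
  obtain ⟨X, _, hX⟩ := Finset.exists_mem_eq_sup'
    (Finset.powerset_nonempty (univ : Finset V)) (diff G)
  calc dC G = diff G X := hX
    _ ≤ diff G (X \ nbhd G X) := diff_le_diff_sdiff_nbhd G X
    _ ≤ diff G A := hmax _ (indep_sdiff_nbhd G X)

lemma critIndep_diff_eq {A : Finset V} (hA : IsCritIndep G A) : diff G A = dC G := by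
  obtain ⟨A₀, hA₀, hA₀d⟩ := exists_critIndep G
  refine le_antisymm (diff_le_dC' G A) ?_
  rw [← hA₀d]
  exact hA.2 A₀ hA₀.1

lemma nbhd_union (A B : Finset V) : nbhd G (A ∪ B) = nbhd G A ∪ nbhd G B := by
  ext v
  simp only [mem_nbhd', mem_union]
  constructor
  · rintro ⟨x, hx | hx, hadj⟩
    · exact Or.inl ⟨x, hx, hadj⟩
    · exact Or.inr ⟨x, hx, hadj⟩
  · rintro (⟨x, hx, hadj⟩ | ⟨x, hx, hadj⟩)
    · exact ⟨x, Or.inl hx, hadj⟩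
    · exact ⟨x, Or.inr hx, hadj⟩

lemma critIndep_inter {A B : Finset V} (hA : IsCritIndep G A) (hB : IsCritIndep G B) :
    IsCritIndep G (A ∩ B) := by
  have hAd := critIndep_diff_eq G hA
  have hBd := critIndep_diff_eq G hB
  have hind : IsIndep G (A ∩ B) := fun u hu v hv =>
    hA.1 u (mem_inter.1 hu).1 v (mem_inter.1 hv).1
  -- submodularity
  have hcard := card_union_add_card_inter A B
  have hNsub : nbhd G (A ∩ B) ⊆ nbhd G A ∩ nbhd G B :=
    subset_inter (nbhd_mono' G inter_subset_left) (nbhd_mono' G inter_subset_right)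
  have hN1 := card_le_card hNsub
  have hN2 := card_union_add_card_inter (nbhd G A) (nbhd G B)
  have hNU : nbhd G (A ∪ B) = nbhd G A ∪ nbhd G B := nbhd_union G A B
  have hsubmod : diff G A + diff G B ≤ diff G (A ∩ B) + diff G (A ∪ B) := by
    unfold diff
    rw [hNU]
    push_cast
    omega
  have hU : diff G (A ∪ B) ≤ dC G := diff_le_dC' G (A ∪ B)
  have hI : dC G ≤ diff G (A ∩ B) := by omega
  exact ⟨hind, fun I hIind => le_trans (le_trans (hA.2 I hIind) (by omega)) hI⟩

/-- `ker(G)` is a critical independent set with difference `dC G`. -/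
lemma kerG_critIndep : IsCritIndep G (kerG G) ∧ diff G (kerG G) = dC G := by
  obtain ⟨A, hA, _⟩ := exists_critIndep G
  -- take a minimum-cardinality critical independent set
  have hTne : ((univ : Finset V).powerset.filter (IsCritIndep G)).Nonempty :=
    ⟨A, mem_filter.2 ⟨by simp, hA⟩⟩
  obtain ⟨A₀, hA₀mem, hA₀min⟩ := Finset.exists_min_image _ card hTne
  have hA₀ : IsCritIndep G A₀ := (mem_filter.1 hA₀mem).2
  have hsub : ∀ B : Finset V, IsCritIndep G B → A₀ ⊆ B := by
    intro B hB
    have hAB : IsCritIndep G (A₀ ∩ B) := critIndep_inter G hA₀ hB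
    have hle : A₀.card ≤ (A₀ ∩ B).card :=
      hA₀min _ (mem_filter.2 ⟨by simp, hAB⟩)
    have : A₀ ∩ B = A₀ :=
      eq_of_subset_of_card_le inter_subset_left (by omega)
    intro v hv
    rw [← this] at hv
    exact (mem_inter.1 hv).2
  have hker : kerG G = A₀ := by
    ext v
    simp only [kerG, mem_filter, mem_univ, true_and]
    exact ⟨fun hv => hv A₀ hA₀, fun hv B hB => hsub B hB hv⟩
  rw [hker]
  exact ⟨hA₀, critIndep_diff_eq G hA₀⟩

end Aux

/-- If `d_c(G) ≥ 1`, then there is an independent set `S₀` with `d(S₀) > 0` and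
`|S₀| ≤ |ker(G)| - d_c(G) + 1`. -/
theorem exists_small_posdiff_indep (G : SimpleGraph V) [DecidableRel G.Adj]
    (h : 1 ≤ dC G) :
    ∃ S₀ : Finset V, IsIndep G S₀ ∧ 0 < diff G S₀ ∧
      (S₀.card : ℤ) ≤ ((kerG G).card : ℤ) - dC G + 1 := by
  obtain ⟨⟨hkerInd, -⟩, hkerd⟩ := kerG_critIndep G
  set n := (kerG G).card with hn
  set m := (nbhd G (kerG G)).card with hm
  have hd : (n : ℤ) - (m : ℤ) = dC G := hkerd
  have hdn : (dC G).toNat ≤ n := by omega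
  have hdt : ((dC G).toNat : ℤ) = dC G := Int.toNat_of_nonneg (by omega)
  obtain ⟨S₀, hS₀sub, hS₀card⟩ :=
    Finset.exists_subset_card_eq (s := kerG G) (n := n + 1 - (dC G).toNat) (by omega)
  refine ⟨S₀, fun u hu v hv => hkerInd u (hS₀sub hu) v (hS₀sub hv), ?_, ?_⟩
  · have hNle : (nbhd G S₀).card ≤ m := card_le_card (nbhd_mono' G hS₀sub)
    unfold diff
    omega
  · omega

end CritGraph
end

section
/- Let G be a finite simple graph. If S₀ is an inclusion-minimal independent set with d(S₀) > 0, then d(S₀) = 1. -/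
open Finset

namespace CritGraph

variable {V : Type*} [Fintype V] [DecidableEq V]

/-- An inclusion-minimal independent set with positive difference has difference
exactly `1`. -/
theorem diff_eq_one_of_minPosIndep (G : SimpleGraph V) [DecidableRel G.Adj]
    (S₀ : Finset V) (hS : MinPosIndep G S₀) : diff G S₀ = 1 := by
  obtain ⟨hind, hpos, hmin⟩ := hS
  have hne : S₀.Nonempty := by
    rcases S₀.eq_empty_or_nonempty with h | h
    · exfalso
      have : nbhd G S₀ = ∅ := by
        subst h; simp [nbhd]
      simp [diff, this, h] at hpos; omega
    · exact h
  obtain ⟨v, hv⟩ := hne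
  set S' := S₀.erase v with hS'
  have hsub : S' ⊂ S₀ := erase_ssubset hv
  have hind' : IsIndep G S' := fun u hu w hw =>
    hind u (mem_of_mem_erase hu) w (mem_of_mem_erase hw)
  have hle : diff G S' ≤ 0 := by
    by_contra h
    exact hmin S' hsub ⟨hind', lt_of_not_ge h⟩
  have hcard : (S'.card : ℤ) = (S₀.card : ℤ) - 1 := by
    rw [hS', card_erase_of_mem hv]
    have : 1 ≤ S₀.card := card_pos.mpr ⟨v, hv⟩
    omega
  have hnsub : nbhd G S' ⊆ nbhd G S₀ := by
    intro x hx
    simp only [nbhd, mem_filter] at hx ⊢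
    obtain ⟨_, y, hy, hadj⟩ := hx
    exact ⟨mem_univ x, y, hsub.subset hy, hadj⟩
  have hnc : ((nbhd G S').card : ℤ) ≤ ((nbhd G S₀).card : ℤ) := by
    exact_mod_cast card_le_card hnsub
  have : diff G S₀ ≤ 1 := by
    simp only [diff] at hle ⊢
    omega
  omega

end CritGraph
end

section
/- Let G be a finite simple graph and let S₁, …, S_k (k ≥ 1) be inclusion-minimal independent sets with d(S_i) > 0 for each i, such that for every i, S_i is not contained in the union of the other sets S_j (j ≠ i). Then d(S₁ ∪ S₂ ∪ … ∪ S_k) ≥ k. -/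
open Finset

namespace CritGraph

variable {V : Type*} [Fintype V] [DecidableEq V]

lemma nbhd_union_s18 (G : SimpleGraph V) [DecidableRel G.Adj] (X Y : Finset V) :
    nbhd G (X ∪ Y) = nbhd G X ∪ nbhd G Y := by
  ext v
  simp only [nbhd, mem_filter, mem_univ, true_and, mem_union]
  constructor
  · rintro ⟨x, hx | hx, hadj⟩
    · exact Or.inl ⟨x, hx, hadj⟩
    · exact Or.inr ⟨x, hx, hadj⟩
  · rintro (⟨x, hx, hadj⟩ | ⟨x, hx, hadj⟩)
    · exact ⟨x, Or.inl hx, hadj⟩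
    · exact ⟨x, Or.inr hx, hadj⟩

lemma nbhd_inter_subset (G : SimpleGraph V) [DecidableRel G.Adj] (X Y : Finset V) :
    nbhd G (X ∩ Y) ⊆ nbhd G X ∩ nbhd G Y := by
  intro v hv
  simp only [nbhd, mem_filter, mem_univ, true_and, mem_inter] at hv ⊢
  obtain ⟨x, hx, hadj⟩ := hv
  exact ⟨⟨x, hx.1, hadj⟩, ⟨x, hx.2, hadj⟩⟩

lemma diff_supermod (G : SimpleGraph V) [DecidableRel G.Adj] (X Y : Finset V) :
    diff G X + diff G Y ≤ diff G (X ∪ Y) + diff G (X ∩ Y) := by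
  have h1 : (X ∪ Y).card + (X ∩ Y).card = X.card + Y.card :=
    Finset.card_union_add_card_inter X Y
  have h2 : (nbhd G (X ∪ Y)).card + (nbhd G (X ∩ Y)).card ≤
      (nbhd G X).card + (nbhd G Y).card := by
    calc (nbhd G (X ∪ Y)).card + (nbhd G (X ∩ Y)).card
        ≤ (nbhd G X ∪ nbhd G Y).card + (nbhd G X ∩ nbhd G Y).card := by
          rw [nbhd_union_s18]
          exact Nat.add_le_add_left (Finset.card_le_card (nbhd_inter_subset G X Y)) _
      _ = (nbhd G X).card + (nbhd G Y).card :=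
          Finset.card_union_add_card_inter _ _
  simp only [diff]
  have h1' : ((X ∪ Y).card : ℤ) + ((X ∩ Y).card : ℤ) = (X.card : ℤ) + (Y.card : ℤ) := by
    exact_mod_cast h1
  have h2' : ((nbhd G (X ∪ Y)).card : ℤ) + ((nbhd G (X ∩ Y)).card : ℤ) ≤
      ((nbhd G X).card : ℤ) + ((nbhd G Y).card : ℤ) := by exact_mod_cast h2
  linarith

lemma indep_subset (G : SimpleGraph V) {S T : Finset V} (h : T ⊆ S)
    (hS : IsIndep G S) : IsIndep G T :=
  fun u hu v hv => hS u (h hu) v (h hv)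

/-- If `S₁, …, S_k` are inclusion-minimal independent sets with positive difference,
none contained in the union of the others, then `d(S₁ ∪ ⋯ ∪ S_k) ≥ k`. -/
theorem diff_biUnion_ge (G : SimpleGraph V) [DecidableRel G.Adj] (k : ℕ) (hk : 1 ≤ k)
    (S : Fin k → Finset V) (hmin : ∀ i, MinPosIndep G (S i))
    (hnc : ∀ i : Fin k, ¬ S i ⊆ ((univ : Finset (Fin k)).erase i).biUnion S) :
    (k : ℤ) ≤ diff G ((univ : Finset (Fin k)).biUnion S) := by
  have key : ∀ T : Finset (Fin k), T.Nonempty → (T.card : ℤ) ≤ diff G (T.biUnion S) := by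
    intro T
    induction T using Finset.induction_on with
    | empty => intro h; exact absurd rfl h.ne_empty
    | insert i T hi ih =>
      intro _
      have hbu : (insert i T).biUnion S = T.biUnion S ∪ S i := by
        rw [Finset.biUnion_insert]
        exact Finset.union_comm _ _
      rcases T.eq_empty_or_nonempty with rfl | hT
      · have hb : (insert i (∅ : Finset (Fin k))).biUnion S = S i := by simp
        have := (hmin i).2.1
        rw [hb]
        have hc : (insert i (∅ : Finset (Fin k))).card = 1 := by simp
        rw [hc]
        omega
      · have hIH := ih hT
        -- the intersection is a proper subset of S i
        have hssub : T.biUnion S ∩ S i ⊂ S i := by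
          constructor
          · exact Finset.inter_subset_right
          · intro hle
            apply hnc i
            intro v hv
            have hv' : v ∈ T.biUnion S := (Finset.inter_subset_left)
              (hle (by exact hv))
            obtain ⟨j, hj, hvj⟩ := Finset.mem_biUnion.mp hv'
            exact Finset.mem_biUnion.mpr ⟨j, Finset.mem_erase.mpr
              ⟨fun h => hi (h ▸ hj), Finset.mem_univ j⟩, hvj⟩
        have hindep : IsIndep G (T.biUnion S ∩ S i) :=
          indep_subset G Finset.inter_subset_right (hmin i).1
        have hle0 : diff G (T.biUnion S ∩ S i) ≤ 0 := by
          by_contra h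
          push_neg at h
          exact (hmin i).2.2 _ hssub ⟨hindep, h⟩
        have hsm := diff_supermod G (T.biUnion S) (S i)
        have hpos := (hmin i).2.1
        have hcard : ((insert i T).card : ℤ) = (T.card : ℤ) + 1 := by
          rw [Finset.card_insert_of_notMem hi]; push_cast; ring
        rw [hbu]
        linarith
  have h := key univ ⟨⟨0, hk⟩, Finset.mem_univ _⟩
  simpa using h

end CritGraph
end
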